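/- Let V be a weighted digraph, F a minimal-weight spanning forest with n trees and G a minimal-weight spanning forest with m trees, m ≥ n. Let D be a subset of vertices such that the D-exchange P of F by G and the D-exchange Q of G by F are both forests. If D contains l ≥ m - n more roots of G than roots of F, then P is a minimal-weight spanning forest with n + l trees and Q is a minimal-weight spanning forest with m - l trees. -/

import Mathlib

open Relation

/-- The arc relation of a functional digraph: `F i = some j` means there is an arc `i → j`. -/
def Arc {V : Type*} (F : V → Option V) (i j : V) : Prop := F i = some j

/-- A directed forest: a functional digraph (out-degree ≤ 1) without directed circuits. -/
def IsForest {V : Type*} (F : V → Option V) : Prop :=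
  ∀ i, ¬ Relation.TransGen (Arc F) i i

/-- `j` is accessible from `i` by a directed walk. -/
def Reaches {V : Type*} (F : V → Option V) (i j : V) : Prop :=
  Relation.ReflTransGen (Arc F) i j

open Classical in
/-- The `D`-exchange of `F` by `G`: replace the outgoing arcs (in `F`) of vertices of `D`
by their outgoing arcs in `G`. -/
noncomputable def exchange {V : Type*} (D : Set V) (F G : V → Option V) : V → Option V :=
  fun i => if i ∈ D then G i else F i

/-- The set of vertices of the tree of the forest `F` with root `r`. -/
def treeSet {V : Type*} (F : V → Option V) (r : V) : Set V := {i | Reaches F i r}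

section Weighted

variable {V : Type*} [Fintype V] [DecidableEq V]

/-- A spanning forest of the digraph with arc relation `A`. -/
def IsSpanningForest (A : V → V → Prop) (F : V → Option V) : Prop :=
  IsForest F ∧ ∀ i j, F i = some j → A i j

/-- The number of trees (= roots) of a forest. -/
def numTrees (F : V → Option V) : ℕ :=
  (Finset.univ.filter (fun i => F i = none)).card

/-- The weight of a forest: the sum of the weights of its arcs. -/
noncomputable def weight (w : V → V → ℝ) (F : V → Option V) : ℝ :=
  ∑ i, (F i).elim 0 (w i)

/-- `F` is a minimal-weight (extreme) spanning forest with `k` trees. -/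
def ExtremeForest (A : V → V → Prop) (w : V → V → ℝ) (k : ℕ) (F : V → Option V) : Prop :=
  IsSpanningForest A F ∧ numTrees F = k ∧
    ∀ G, IsSpanningForest A G → numTrees G = k → weight w F ≤ weight w G

/-- `φ_k`: the minimum weight of a spanning forest with exactly `k` trees. -/
noncomputable def phi (A : V → V → Prop) (w : V → V → ℝ) (k : ℕ) : ℝ :=
  sInf (weight w '' {F | IsSpanningForest A F ∧ numTrees F = k})

end Weighted

section Aux
variable {V : Type*}

lemma arc_rightUnique (F : V → Option V) : Relator.RightUnique (Arc F) := by
  intro a b c hb hc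
  unfold Arc at hb hc
  rw [hb] at hc
  exact Option.some.inj hc

lemma root_unique {F : V → Option V} {i r₁ r₂ : V} (h₁ : Reaches F i r₁) (h₂ : Reaches F i r₂)
    (e₁ : F r₁ = none) (e₂ : F r₂ = none) : r₁ = r₂ := by
  rcases ReflTransGen.total_of_right_unique (arc_rightUnique F) h₁ h₂ with h | h
  · rcases h.cases_head with h | ⟨c, hc, -⟩
    · exact h
    · rw [Arc, e₁] at hc; cases hc
  · rcases h.cases_head with h | ⟨c, hc, -⟩
    · exact h.symm
    · rw [Arc, e₂] at hc; cases hc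

lemma root_mem_unique {F : V → Option V} {i r : V} (hr : F r = none)
    (hi : i ∈ treeSet F r) (hroot : F i = none) : i = r := by
  rcases ReflTransGen.cases_head hi with h | ⟨c, hc, -⟩
  · exact h
  · rw [Arc, hroot] at hc; cases hc

lemma treeSet_closed {F : V → Option V} {r : V} (hr : F r = none) {i j : V}
    (hi : i ∈ treeSet F r) (hij : F i = some j) : j ∈ treeSet F r := by
  rcases ReflTransGen.cases_head hi with h | ⟨c, hc, hcr⟩
  · subst h; rw [hr] at hij; cases hij
  · have : c = j := arc_rightUnique F hc hij
    subst this; exact hcr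

lemma treeSet_closed' {F : V → Option V} {r : V} {i j : V}
    (hi : i ∉ treeSet F r) (hij : F i = some j) : j ∉ treeSet F r := by
  intro hj
  exact hi (ReflTransGen.head hij hj)

lemma exists_root [Fintype V] [DecidableEq V] {F : V → Option V} (hF : IsForest F) :
    ∀ i, ∃ r, Reaches F i r ∧ F r = none := by
  classical
  suffices h : ∀ N i, (Finset.univ.filter (fun j => Reaches F i j)).card ≤ N →
      ∃ r, Reaches F i r ∧ F r = none by
    intro i; exact h _ i le_rfl
  intro N
  induction N with
  | zero =>
    intro i h
    exfalso
    have : i ∈ Finset.univ.filter (fun j => Reaches F i j) := by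
      exact Finset.mem_filter.mpr ⟨Finset.mem_univ _, ReflTransGen.refl⟩
    have := Finset.card_pos.mpr ⟨i, this⟩
    omega
  | succ N ih =>
    intro i h
    cases hFi : F i with
    | none => exact ⟨i, ReflTransGen.refl, hFi⟩
    | some j =>
      have hsub : (Finset.univ.filter (fun x => Reaches F j x)) ⊂
          (Finset.univ.filter (fun x => Reaches F i x)) := by
        constructor
        · intro x hx
          simp only [Finset.mem_filter, Finset.mem_univ, true_and] at hx ⊢
          exact ReflTransGen.head hFi hx
        · intro hsub
          have hi : i ∈ Finset.univ.filter (fun x => Reaches F i x) := by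
            exact Finset.mem_filter.mpr ⟨Finset.mem_univ _, ReflTransGen.refl⟩
          have := hsub hi
          simp only [Finset.mem_filter, Finset.mem_univ, true_and] at this
          exact hF i (TransGen.head' hFi this)
      have hcard : (Finset.univ.filter (fun x => Reaches F j x)).card ≤ N := by
        have := Finset.card_lt_card hsub
        omega
      obtain ⟨r, hr, hroot⟩ := ih j hcard
      exact ⟨r, ReflTransGen.head hFi hr, hroot⟩

end Aux

section Aux2
variable {V : Type*}

lemma arc_exchange_mem {D : Set V} {F G : V → Option V} {i j : V} (hi : i ∈ D)
    (h : Arc (exchange D F G) i j) : Arc G i j := by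
  unfold Arc exchange at h
  rwa [if_pos hi] at h

lemma arc_exchange_not_mem {D : Set V} {F G : V → Option V} {i j : V} (hi : i ∉ D)
    (h : Arc (exchange D F G) i j) : Arc F i j := by
  unfold Arc exchange at h
  rwa [if_neg hi] at h

/-- If all `F`-arcs leaving `Dᶜ` stay in `Dᶜ`, the exchange of two forests is a forest. -/
lemma isForest_exchange {D : Set V} {F G : V → Option V} (hF : IsForest F) (hG : IsForest G)
    (hcl : ∀ i j, i ∉ D → F i = some j → j ∉ D) : IsForest (exchange D F G) := by
  set P := exchange D F G with hP
  have out : ∀ i j, i ∉ D → ReflTransGen (Arc P) i j → j ∉ D ∧ ReflTransGen (Arc F) i j := by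
    intro i j hi h
    induction h with
    | refl => exact ⟨hi, ReflTransGen.refl⟩
    | tail h1 h2 ih =>
      obtain ⟨hb, hfb⟩ := ih
      have harc := arc_exchange_not_mem hb h2
      exact ⟨hcl _ _ hb harc, hfb.tail harc⟩
  intro i hcyc
  by_cases hi : i ∈ D
  · have inside : ∀ a, TransGen (Arc P) a i → a ∈ D → TransGen (Arc G) a i := by
      intro a h
      induction h using TransGen.head_induction_on with
      | single h => intro ha; exact TransGen.single (arc_exchange_mem ha h)
      | head h1 h2 ih =>
        rename_i a c
        intro ha
        by_cases hc : c ∈ D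
        · exact TransGen.head (arc_exchange_mem ha h1) (ih hc)
        · exact absurd hi (out c i hc h2.to_reflTransGen).1
    exact hG i (inside i hcyc hi)
  · obtain ⟨c, h1, h2⟩ := TransGen.head'_iff.mp hcyc
    have hfc := arc_exchange_not_mem hi h1
    have hc : c ∉ D := hcl _ _ hi hfc
    exact hF i (TransGen.head' hfc (out c i hc h2).2)

lemma exchange_compl (D : Set V) (F G : V → Option V) :
    exchange D G F = exchange Dᶜ F G := by
  funext i
  unfold exchange
  by_cases hi : i ∈ D <;> simp [hi]

/-- If all `F`-arcs leaving `D` stay in `D`, the exchange `exchange D G F` is a forest. -/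
lemma isForest_exchange' {D : Set V} {F G : V → Option V} (hF : IsForest F) (hG : IsForest G)
    (hcl : ∀ i j, i ∈ D → F i = some j → j ∈ D) : IsForest (exchange D G F) := by
  rw [exchange_compl]
  exact isForest_exchange hF hG (fun i j hi hij => by
    simp only [Set.mem_compl_iff, not_not] at hi ⊢
    exact hcl i j hi hij)

end Aux2

section Aux3
variable {V : Type*} [Fintype V] [DecidableEq V]

lemma spanning_exchange {A : V → V → Prop} {F G : V → Option V} {D : Set V}
    (hFor : IsForest (exchange D F G)) (hF : IsSpanningForest A F) (hG : IsSpanningForest A G) :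
    IsSpanningForest A (exchange D F G) := by
  refine ⟨hFor, fun i j h => ?_⟩
  unfold exchange at h
  by_cases hi : i ∈ D
  · rw [if_pos hi] at h; exact hG.2 i j h
  · rw [if_neg hi] at h; exact hF.2 i j h

lemma weight_exchange (w : V → V → ℝ) (F G : V → Option V) (D : Set V) :
    weight w (exchange D F G) + weight w (exchange D G F) = weight w F + weight w G := by
  unfold weight exchange
  rw [← Finset.sum_add_distrib, ← Finset.sum_add_distrib]
  apply Finset.sum_congr rfl
  intro i _
  by_cases hi : i ∈ D <;> simp [hi, add_comm]

lemma numTrees_exchange (F G : V → Option V) (D : Set V) [DecidablePred (· ∈ D)] :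
    numTrees (exchange D F G) + (Finset.univ.filter (fun i => F i = none ∧ i ∈ D)).card
      = numTrees F + (Finset.univ.filter (fun i => G i = none ∧ i ∈ D)).card := by
  classical
  unfold numTrees
  rw [Finset.card_filter, Finset.card_filter, Finset.card_filter, Finset.card_filter,
    ← Finset.sum_add_distrib, ← Finset.sum_add_distrib]
  apply Finset.sum_congr rfl
  intro i _
  by_cases hi : i ∈ D
  · by_cases hg : G i = none <;> by_cases hf : F i = none <;> simp [exchange, hi, hg, hf]
  · by_cases hf : F i = none <;> simp [exchange, hi, hf]

lemma exists_free_tree {H K : V → Option V} (hH : IsForest H)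
    (hcard : numTrees K < numTrees H) :
    ∃ r, H r = none ∧ ∀ i ∈ treeSet H r, K i ≠ none := by
  classical
  by_contra hcon
  push_neg at hcon
  choose f hf1 hf2 using hcon
  have hle : (Finset.univ.filter (fun i => H i = none)).card
      ≤ (Finset.univ.filter (fun i => K i = none)).card := by
    apply Finset.card_le_card_of_injOn (fun r => if h : H r = none then f r h else r)
    · intro r hr
      simp only [Finset.mem_coe, Finset.mem_filter, Finset.mem_univ, true_and] at hr ⊢
      rw [dif_pos hr]
      exact hf2 r hr
    · intro r₁ h₁ r₂ h₂ heq
      simp only [Finset.coe_filter, Finset.mem_univ, true_and, Set.mem_setOf_eq] at h₁ h₂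
      simp only [dif_pos h₁, dif_pos h₂] at heq
      have := hf1 r₁ h₁
      rw [heq] at this
      exact root_unique this (hf1 r₂ h₂) h₁ h₂
  unfold numTrees at hcard
  omega

end Aux3

section Aux4
variable {V : Type*} [Fintype V] [DecidableEq V]

lemma iter_exchange {A : V → V → Prop} {w : V → V → ℝ} {n m : ℕ} {F G : V → Option V}
    (hnm : n ≤ m) (hF : ExtremeForest A w n F) (hG : ExtremeForest A w m G) :
    ∀ k (H K : V → Option V), IsSpanningForest A H → IsSpanningForest A K →
      numTrees H = m + k → numTrees K + k = n →
      weight w F + weight w G ≤ weight w H + weight w K := by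
  intro k
  induction k with
  | zero =>
    intro H K hH hK hnH hnK
    simp only [Nat.add_zero] at hnH hnK
    have h1 := hF.2.2 K hK hnK
    have h2 := hG.2.2 H hH hnH
    linarith
  | succ k ih =>
    intro H K hH hK hnH hnK
    classical
    have hlt : numTrees K < numTrees H := by omega
    obtain ⟨r, hr, hfree⟩ := exists_free_tree hH.1 hlt
    set D := treeSet H r with hD
    have hPf : IsForest (exchange D H K) :=
      isForest_exchange hH.1 hK.1 (fun i j hi hij => treeSet_closed' hi hij)
    have hQf : IsForest (exchange D K H) :=
      isForest_exchange' hH.1 hK.1 (fun i j hi hij => treeSet_closed hr hi hij)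
    have cH : (Finset.univ.filter (fun i => H i = none ∧ i ∈ D)).card = 1 := by
      have heq : Finset.univ.filter (fun i => H i = none ∧ i ∈ D) = {r} := by
        ext i
        simp only [Finset.mem_filter, Finset.mem_univ, true_and, Finset.mem_singleton]
        constructor
        · rintro ⟨h1, h2⟩; exact root_mem_unique hr h2 h1
        · rintro rfl; exact ⟨hr, ReflTransGen.refl⟩
      rw [heq, Finset.card_singleton]
    have cK : (Finset.univ.filter (fun i => K i = none ∧ i ∈ D)).card = 0 := by
      rw [Finset.card_eq_zero, Finset.filter_eq_empty_iff]
      rintro i - ⟨h1, h2⟩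
      exact hfree i h2 h1
    have e1 := numTrees_exchange H K D
    have e2 := numTrees_exchange K H D
    rw [cH, cK] at e1 e2
    have hw := weight_exchange w H K D
    have := ih (exchange D H K) (exchange D K H)
      (spanning_exchange hPf hH hK) (spanning_exchange hQf hK hH)
      (by omega) (by omega)
    linarith

end Aux4


/-- Proposition 3(b): if `D` contains `l ≥ m - n` more roots of `G` than roots of `F`, and
both `D`-exchanges are forests, then the `D`-exchange of `F` by `G` is a minimal-weight
spanning forest with `n + l` trees and the `D`-exchange of `G` by `F` is a minimal-weight
spanning forest with `m - l` trees. -/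
theorem exchange_extreme_of_more_G_roots {V : Type*} [Fintype V] [DecidableEq V]
    (A : V → V → Prop) (w : V → V → ℝ) (n m l : ℕ) (hnm : n ≤ m)
    (F G : V → Option V) (hF : ExtremeForest A w n F) (hG : ExtremeForest A w m G)
    (D : Finset V)
    (hP : IsForest (exchange (↑D) F G)) (hQ : IsForest (exchange (↑D) G F))
    (hl : m - n ≤ l)
    (hcount : (D.filter (fun i => G i = none)).card
      = (D.filter (fun i => F i = none)).card + l) :
    ExtremeForest A w (n + l) (exchange (↑D) F G) ∧
      ExtremeForest A w (m - l) (exchange (↑D) G F) := by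
  classical
  have hbr : ∀ X : V → Option V,
      (Finset.univ.filter (fun i => X i = none ∧ i ∈ (↑D : Set V))).card
        = (D.filter (fun i => X i = none)).card := by
    intro X
    congr 1
    ext i
    simp [and_comm]
  have e1 := numTrees_exchange F G (↑D : Set V)
  have e2 := numTrees_exchange G F (↑D : Set V)
  rw [hbr F, hbr G] at e1 e2
  have hnF := hF.2.1
  have hnG := hG.2.1
  have hlm : l ≤ m := by
    have hsub : D.filter (fun i => G i = none) ⊆ Finset.univ.filter (fun i => G i = none) := by
      intro i hi
      simp only [Finset.mem_filter] at hi ⊢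
      exact ⟨Finset.mem_univ i, hi.2⟩
    have := Finset.card_le_card hsub
    unfold numTrees at hnG
    omega
  have hNP : numTrees (exchange (↑D) F G) = n + l := by omega
  have hNQ : numTrees (exchange (↑D) G F) = m - l := by omega
  have hw := weight_exchange w F G (↑D : Set V)
  have key : ∀ H K, IsSpanningForest A H → IsSpanningForest A K →
      numTrees H = n + l → numTrees K = m - l →
      weight w F + weight w G ≤ weight w H + weight w K := by
    intro H K hH hK h1 h2
    exact iter_exchange hnm hF hG (l - (m - n)) H K hH hK (by omega) (by omega)
  have hPs : IsSpanningForest A (exchange (↑D) F G) := spanning_exchange hP hF.1 hG.1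
  have hQs : IsSpanningForest A (exchange (↑D) G F) := spanning_exchange hQ hG.1 hF.1
  refine ⟨⟨hPs, hNP, ?_⟩, ⟨hQs, hNQ, ?_⟩⟩
  · intro H hH hHn
    have := key H (exchange (↑D) G F) hH hQs hHn hNQ
    linarith
  · intro K hK hKn
    have := key (exchange (↑D) F G) K hPs hK hNP hKn
    linarith
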